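/- Let X be a Banach lattice such that the quotient Banach lattice X/X_a has order continuous dual (X/X_a)*. Then X has the disjoint order continuity property: every norm bounded disjoint sequence (f_n) in X₊ with f_n → 0 in σ(X, X_n^~) converges weakly to 0. -/

import Mathlib

open Filter Topology Pointwise

noncomputable section

/-- A directed index type for nets. -/
structure DirectedType : Type 1 where
  ι : Type
  r : ι → ι → Prop
  nonempty : Nonempty ι
  refl : ∀ a, r a a
  trans : ∀ a b c, r a b → r b c → r a c
  directed : ∀ a b, ∃ c, r a c ∧ r b c

/-- The natural numbers as a directed type (for sequences). -/
def natDir : DirectedType where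
  ι := ℕ
  r := (· ≤ ·)
  nonempty := ⟨0⟩
  refl := fun _ => le_refl _
  trans := fun _ _ _ => le_trans
  directed := fun a b => ⟨max a b, le_max_left _ _, le_max_right _ _⟩

/-- A real valued net tends to zero. -/
def NetTendstoZero (D : DirectedType) (u : D.ι → ℝ) : Prop :=
  ∀ ε : ℝ, 0 < ε → ∃ i₀, ∀ i, D.r i₀ i → |u i| < ε

variable {X : Type*} [NormedAddCommGroup X] [Lattice X] [HasSolidNorm X] [IsOrderedAddMonoid X]
    [NormedSpace ℝ X]

/-- Order convergence of a net: there is a decreasing net `h` with infimum `0`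
dominating `|f i - x|` eventually. -/
def OrderConvNet (D : DirectedType) (f : D.ι → X) (x : X) : Prop :=
  ∃ (E : DirectedType) (h : E.ι → X),
    (∀ γ₁ γ₂, E.r γ₁ γ₂ → h γ₂ ≤ h γ₁) ∧ IsGLB (Set.range h) 0 ∧
      ∀ γ, ∃ i₀, ∀ i, D.r i₀ i → |f i - x| ≤ h γ

/-- The order closure of a set: all limits of order convergent nets from the set. -/
def OrderClosure (C : Set X) : Set X :=
  {x | ∃ (D : DirectedType) (f : D.ι → X), (∀ i, f i ∈ C) ∧ OrderConvNet D f x}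

/-- A set is order closed if it contains all order limits of nets from it. -/
def IsOrderClosed (C : Set X) : Prop := OrderClosure C ⊆ C

/-- Unbounded order convergence of a net. -/
def UOConvNet (D : DirectedType) (f : D.ι → X) (x : X) : Prop :=
  ∀ h : X, 0 ≤ h → OrderConvNet D (fun i => |f i - x| ⊓ h) 0

/-- Membership in the order continuous dual `X_n^~`. -/
def InOCDual (g : X →L[ℝ] ℝ) : Prop :=
  ∀ (D : DirectedType) (f : D.ι → X), OrderConvNet D f 0 →
    NetTendstoZero D fun i => g (f i)

/-- Membership in the unbounded order continuous dual `X_uo^~`. -/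
def InUODual (g : X →L[ℝ] ℝ) : Prop :=
  ∀ (D : DirectedType) (f : D.ι → X), (∃ M, ∀ i, ‖f i‖ ≤ M) → UOConvNet D f 0 →
    NetTendstoZero D fun i => g (f i)

/-- Convergence of a net in the topology `σ(X, X_n^~)`. -/
def SigmaNConvNet (D : DirectedType) (f : D.ι → X) (x : X) : Prop :=
  ∀ g : X →L[ℝ] ℝ, InOCDual g → NetTendstoZero D fun i => g (f i) - g x

/-- Convergence of a net in the topology `σ(X, X_uo^~)`. -/
def SigmaUOConvNet (D : DirectedType) (f : D.ι → X) (x : X) : Prop :=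
  ∀ g : X →L[ℝ] ℝ, InUODual g → NetTendstoZero D fun i => g (f i) - g x

/-- A set is `σ(X, X_n^~)`-closed. -/
def IsSigmaNClosed (C : Set X) : Prop :=
  ∀ (D : DirectedType) (f : D.ι → X), (∀ i, f i ∈ C) →
    ∀ x, SigmaNConvNet D f x → x ∈ C

/-- A set is `σ(X, X_uo^~)`-closed. -/
def IsSigmaUOClosed (C : Set X) : Prop :=
  ∀ (D : DirectedType) (f : D.ι → X), (∀ i, f i ∈ C) →
    ∀ x, SigmaUOConvNet D f x → x ∈ C

/-- The `σ(X, X_n^~)`-closure of a set. -/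
def SigmaNClosure (C : Set X) : Set X :=
  {x | ∃ (D : DirectedType) (f : D.ι → X), (∀ i, f i ∈ C) ∧ SigmaNConvNet D f x}

/-- The `|σ|(X, X_n^~)`-sequential closure of a set. -/
def AbsSigmaSeqClosure (C : Set X) : Set X :=
  {x | ∃ s : ℕ → X, (∀ n, s n ∈ C) ∧
    ∀ g : X →L[ℝ] ℝ, InOCDual g → Tendsto (fun n => g (|s n - x|)) atTop (𝓝 0)}

/-- A set is `|σ|(X, X_n^~)`-sequentially closed. -/
def IsAbsSigmaSeqClosed (C : Set X) : Prop := AbsSigmaSeqClosure C ⊆ C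

/-- The order on the dual: `g ≤ h` iff `g x ≤ h x` on the positive cone. -/
def dualLE (g h : X →L[ℝ] ℝ) : Prop := ∀ x : X, 0 ≤ x → g x ≤ h x

/-- Order continuity of the norm on a subset `S` of the dual: every net in `S`
decreasing to `0` (infimum `0` among lower bounds from `S`) converges to `0` in
the operator norm. -/
def DualOCOn (S : Set (X →L[ℝ] ℝ)) : Prop :=
  ∀ (D : DirectedType) (f : D.ι → (X →L[ℝ] ℝ)), (∀ i, f i ∈ S) →
    (∀ i j, D.r i j → dualLE (f j) (f i)) → (∀ i, dualLE 0 (f i)) →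
    (∀ h ∈ S, (∀ i, dualLE h (f i)) → dualLE h 0) →
    NetTendstoZero D fun i => ‖f i‖

/-- A sequence is weakly null. -/
def WeaklyNull (f : ℕ → X) : Prop :=
  ∀ g : X →L[ℝ] ℝ, Tendsto (fun n => g (f n)) atTop (𝓝 0)

/-- The sequence satisfies a lower `ℓ¹`-estimate, i.e. it is equivalent to the
unit vector basis of `ℓ¹`. -/
def IsL1Basic (f : ℕ → X) : Prop :=
  ∃ M : ℝ, 0 < M ∧ ∀ (m : ℕ) (a : ℕ → ℝ),
    (1 / M) * ∑ k ∈ Finset.range m, |a k| ≤ ‖∑ k ∈ Finset.range m, a k • f k‖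

variable (X)

/-- Order continuity of the norm of `X`. -/
def OCNorm : Prop :=
  ∀ (D : DirectedType) (f : D.ι → X), (∀ i j, D.r i j → f j ≤ f i) →
    IsGLB (Set.range f) 0 → NetTendstoZero D fun i => ‖f i‖

/-- The order continuous dual as a set of continuous linear functionals. -/
def OCDual : Set (X →L[ℝ] ℝ) := {g | InOCDual g}

/-- The norm dual `X*` is order continuous. -/
def DualOrderContinuous : Prop := DualOCOn (Set.univ : Set (X →L[ℝ] ℝ))

/-- The order continuous dual `X_n^~` is order continuous. -/
def OCDualOrderContinuous : Prop := DualOCOn (OCDual X)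

/-- `X` is monotonically complete. -/
def MonotonicallyComplete : Prop :=
  ∀ (D : DirectedType) (f : D.ι → X), (∀ i j, D.r i j → f i ≤ f j) →
    (∃ M, ∀ i, ‖f i‖ ≤ M) → ∃ s, IsLUB (Set.range f) s

/-- `X` is Dedekind complete. -/
def DedekindComplete : Prop :=
  ∀ S : Set X, S.Nonempty → BddAbove S → ∃ s, IsLUB S s

/-- `X` is σ-Dedekind complete. -/
def SigmaDedekindComplete : Prop :=
  ∀ f : ℕ → X, BddAbove (Set.range f) → ∃ s, IsLUB (Set.range f) s

/-- `X` has the weak Fatou property. -/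
def WeakFatou : Prop :=
  ∃ r : ℝ, 0 < r ∧ ∀ (D : DirectedType) (f : D.ι → X),
    (∀ i j, D.r i j → f i ≤ f j) → ∀ s, IsLUB (Set.range f) s →
    ∀ M : ℝ, (∀ i, ‖f i‖ ≤ M) → ‖s‖ ≤ r * M

/-- `X_n^~` separates the points of `X`. -/
def OCDualSeparatesPoints : Prop :=
  ∀ x : X, x ≠ 0 → ∃ g : X →L[ℝ] ℝ, InOCDual g ∧ g x ≠ 0

/-- `X_n^~` contains a strictly positive element. -/
def HasStrictlyPositiveOCFunctional : Prop :=
  ∃ g : X →L[ℝ] ℝ, InOCDual g ∧ ∀ x : X, x ≠ 0 → 0 < g (|x|)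

/-- The unit ball `B` determined by `X_n^~`. -/
def KSBall : Set X :=
  {x | ∀ g : X →L[ℝ] ℝ, InOCDual g → dualLE 0 g → ‖g‖ ≤ 1 → g (|x|) ≤ 1}

/-- `σ(X, X_n^~)` has the Krein–Smulian property. -/
def KreinSmulianProperty : Prop :=
  ∀ C : Set X, Convex ℝ C →
    (∀ k : ℕ, IsSigmaNClosed (C ∩ (k : ℝ) • KSBall X)) → IsSigmaNClosed C

/-- Property `P1`: every order closed convex set is `σ(X, X_n^~)`-closed. -/
def PropP1 : Prop := ∀ C : Set X, Convex ℝ C → IsOrderClosed C → IsSigmaNClosed C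

/-- Property `P4`: every norm bounded order closed convex set is
`|σ|(X, X_n^~)`-sequentially closed. -/
def PropP4 : Prop :=
  ∀ C : Set X, Convex ℝ C → (∃ M, ∀ x ∈ C, ‖x‖ ≤ M) → IsOrderClosed C →
    IsAbsSigmaSeqClosed C

/-- The disjoint order continuity property. -/
def DOCP : Prop :=
  ∀ f : ℕ → X, (∀ n, 0 ≤ f n) → (∃ M, ∀ n, ‖f n‖ ≤ M) →
    (∀ n m, n ≠ m → f n ⊓ f m = 0) →
    (∀ g : X →L[ℝ] ℝ, InOCDual g → Tendsto (fun n => g (f n)) atTop (𝓝 0)) →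
    WeaklyNull f

/-- The order continuous part `X_a` of `X`. -/
def OrderContPart : Set X :=
  {f | ∀ (D : DirectedType) (g : D.ι → X), (∀ i, |g i| ≤ |f|) →
    OrderConvNet D g 0 → NetTendstoZero D fun i => ‖g i‖}

/-- The order subsequence splitting property. -/
def OSSP : Prop :=
  ∀ f : ℕ → X, (∀ n, 0 ≤ f n) → (∃ M, ∀ n, ‖f n‖ ≤ M) → UOConvNet natDir f 0 →
    ∃ φ : ℕ → ℕ, StrictMono φ ∧ ∃ x y z : ℕ → X,
      (∀ k, f (φ k) = x k + y k + z k) ∧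
      (∀ k, 0 ≤ x k) ∧ (∀ k, 0 ≤ y k) ∧ (∀ k, 0 ≤ z k) ∧
      (∀ k, x k ∈ OrderContPart X) ∧
      (∀ k l, k ≠ l → y k ⊓ y l = 0) ∧
      (∃ b, ∀ k, z k ≤ b)

variable {X}

section MyHelpers
set_option linter.unusedSectionVars false


section Helpers
variable {E : Type*} [NormedAddCommGroup E] [Lattice E] [HasSolidNorm E] [IsOrderedAddMonoid E] [NormedSpace ℝ E]

lemma hlm1 (a b : E) : a - a ⊓ b = (a - b)⁺ := by
  rw [posPart_def, sub_inf]; simp [sup_comm]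

lemma hlm2 (a b : E) : a - (a - b)⁺ = a ⊓ b := by
  rw [posPart_def, sub_sup]; simp [inf_comm]

lemma hlm3 {a b c : E} (ha : 0 ≤ a) (hb : 0 ≤ b) (hc : 0 ≤ c) :
    (a + b) ⊓ c ≤ a ⊓ c + b ⊓ c := by
  rw [← sub_le_iff_le_add']
  rw [sub_inf]
  refine sup_le (le_inf ?_ ?_) (le_inf ?_ ?_)
  · exact sub_le_iff_le_add'.2 inf_le_left
  · exact le_trans (sub_le_self _ ha) inf_le_right
  · exact (sub_nonpos.2 inf_le_right).trans hb
  · exact (sub_nonpos.2 inf_le_right).trans hc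

lemma posPart_le_abs' (a : E) : a⁺ ≤ |a| := by
  rw [← posPart_add_negPart a]; exact le_add_of_nonneg_right (negPart_nonneg a)

lemma negPart_le_abs' (a : E) : a⁻ ≤ |a| := by
  rw [← posPart_add_negPart a]; exact le_add_of_nonneg_left (posPart_nonneg a)

lemma norm_posPart_le' (a : E) : ‖a⁺‖ ≤ ‖a‖ :=
  HasSolidNorm.solid (by rw [abs_of_nonneg (posPart_nonneg a)]; exact posPart_le_abs' a)

lemma norm_negPart_le' (a : E) : ‖a⁻‖ ≤ ‖a‖ :=
  HasSolidNorm.solid (by rw [abs_of_nonneg (negPart_nonneg a)]; exact negPart_le_abs' a)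

lemma myNegAbsLe (a : E) : -|a| ≤ a := by
  have h2 := neg_le_neg (neg_le_abs a)
  simpa using h2

lemma norm_of_le {a b : E} (ha : 0 ≤ a) (hab : a ≤ b) : ‖a‖ ≤ ‖b‖ :=
  HasSolidNorm.solid (by rw [abs_of_nonneg ha, abs_of_nonneg (ha.trans hab)]; exact hab)

end Helpers
section Smul
variable {E : Type*} [NormedAddCommGroup E] [Lattice E] [HasSolidNorm E] [IsOrderedAddMonoid E] [NormedSpace ℝ E]

lemma disj_nsmul {a b : E} (ha : 0 ≤ a) (hb : 0 ≤ b) (hab : a ⊓ b = 0) (n : ℕ) :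
    (n • a) ⊓ b = 0 := by
  induction n with
  | zero => simpa using inf_eq_left.2 hb
  | succ n ih =>
    rw [succ_nsmul]
    refine le_antisymm ?_ (le_inf (add_nonneg (nsmul_nonneg ha n) ha) hb)
    calc (n • a + a) ⊓ b ≤ (n • a) ⊓ b + a ⊓ b := hlm3 (nsmul_nonneg ha n) ha hb
    _ = 0 := by rw [ih, hab, add_zero]

lemma decomp_negPart {u v : E} (hv : 0 ≤ v) (huv : u ⊓ v = 0) : (u - v)⁻ = v := by
  have : (u - v)⁻ = (v - u)⁺ := by rw [negPart_def, posPart_def, neg_sub]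
  rw [this, ← hlm1, inf_comm, huv, sub_zero]

lemma semiclosed {a : E} {n : ℕ} (hn : 0 < n) (h : 0 ≤ n • a) : 0 ≤ a := by
  have hd : a⁺ ⊓ a⁻ = 0 := posPart_inf_negPart_eq_zero a
  have h1 : (n • a⁺) ⊓ (n • a⁻) = 0 := by
    rw [inf_comm]
    refine disj_nsmul (negPart_nonneg a) ?_ ?_ n
    · exact nsmul_nonneg (posPart_nonneg a) n
    · rw [inf_comm]; exact disj_nsmul (posPart_nonneg a) (negPart_nonneg a) hd n
  have h2 : n • a = n • a⁺ - n • a⁻ := by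
    rw [← smul_sub, posPart_sub_negPart]
  have h3 : (n • a)⁻ = n • a⁻ := by rw [h2]; exact decomp_negPart (nsmul_nonneg (negPart_nonneg a) n) h1
  have h4 : n • a⁻ = 0 := by rw [← h3]; exact negPart_of_nonneg h
  have h5 : a⁻ ≤ n • a⁻ := by
    obtain ⟨m, rfl⟩ := Nat.exists_eq_succ_of_ne_zero hn.ne'
    rw [succ_nsmul]
    exact le_add_of_nonneg_left (nsmul_nonneg (negPart_nonneg a) m)
  have : a⁻ = 0 := le_antisymm (h5.trans_eq h4) (negPart_nonneg a)
  exact negPart_eq_zero.1 this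

lemma rsmul_nonneg {c : ℝ} {x : E} (hc : 0 ≤ c) (hx : 0 ≤ x) : 0 ≤ c • x := by
  have hcl : IsClosed {y : E | 0 ≤ y} := isClosed_le continuous_const continuous_id
  have key : ∀ k : ℕ, 0 ≤ ((⌈c * (k + 1)⌉₊ : ℝ) / (k + 1)) • x := by
    intro k
    have hne : ((k : ℝ) + 1) ≠ 0 := by positivity
    have h1 : (k + 1) • ((((⌈c * (k + 1)⌉₊ : ℝ)) / (k + 1)) • x) = (⌈c * (k + 1)⌉₊ : ℕ) • x := by
      rw [← Nat.cast_smul_eq_nsmul ℝ, ← Nat.cast_smul_eq_nsmul ℝ (⌈c * (k + 1)⌉₊), smul_smul]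
      congr 1
      push_cast
      field_simp
    refine semiclosed (Nat.succ_pos k) ?_
    rw [h1]
    exact nsmul_nonneg hx _
  have htend : Tendsto (fun k : ℕ => ((⌈c * (k + 1)⌉₊ : ℝ) / (k + 1)) • x) atTop (𝓝 (c • x)) := by
    refine Tendsto.smul_const ?_ x
    have hub : Tendsto (fun k : ℕ => c + 1 / ((k : ℝ) + 1)) atTop (𝓝 c) := by
      have h0 : Tendsto (fun k : ℕ => 1 / ((k : ℝ) + 1)) atTop (𝓝 0) := by
        exact_mod_cast tendsto_one_div_add_atTop_nhds_zero_nat (𝕜 := ℝ)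
      simpa using (tendsto_const_nhds (x := c)).add h0
    refine tendsto_of_tendsto_of_tendsto_of_le_of_le tendsto_const_nhds hub ?_ ?_
    · intro k
      have hk : (0:ℝ) < (k : ℝ) + 1 := by positivity
      rw [le_div_iff₀ hk]
      exact Nat.le_ceil _
    · intro k
      have hk : (0:ℝ) < (k : ℝ) + 1 := by positivity
      rw [div_le_iff₀ hk]
      have := (Nat.ceil_lt_add_one (by positivity : 0 ≤ c * ((k:ℝ) + 1))).le
      calc (⌈c * ((k:ℝ) + 1)⌉₊ : ℝ) ≤ c * ((k:ℝ)+1) + 1 := this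
        _ ≤ (c + 1 / ((k:ℝ)+1)) * ((k:ℝ)+1) := by rw [add_mul, div_mul_cancel₀ _ hk.ne']
  exact hcl.mem_of_tendsto htend (Filter.Eventually.of_forall key)
end Smul
section ConeCLM
variable {E : Type*} [NormedAddCommGroup E] [Lattice E] [HasSolidNorm E] [IsOrderedAddMonoid E] [NormedSpace ℝ E]

lemma coneCLM (p : E → ℝ) (C : ℝ)
    (hadd : ∀ x y : E, 0 ≤ x → 0 ≤ y → p (x + y) = p x + p y)
    (hbdd : ∀ x : E, 0 ≤ x → |p x| ≤ C * ‖x‖) :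
    ∃ F : E →L[ℝ] ℝ, ∀ x : E, 0 ≤ x → F x = p x := by
  have hp0 : p 0 = 0 := by
    have := hadd 0 0 le_rfl le_rfl
    simp at this
    linarith
  set C' := max C 0 with hC'
  have hC0 : 0 ≤ C' := le_max_right _ _
  have hbdd' : ∀ x : E, 0 ≤ x → |p x| ≤ C' * ‖x‖ := fun x hx =>
    (hbdd x hx).trans (mul_le_mul_of_nonneg_right (le_max_left _ _) (norm_nonneg x))
  set F0 : E → ℝ := fun x => p x⁺ - p x⁻ with hF0
  have hkey : ∀ a : E, a⁺ = a + a⁻ := fun a => eq_add_of_sub_eq (posPart_sub_negPart a)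
  have hFadd : ∀ x y : E, F0 (x + y) = F0 x + F0 y := by
    intro x y
    have hid : (x + y)⁺ + (x⁻ + y⁻) = (x + y)⁻ + (x⁺ + y⁺) := by
      rw [hkey (x + y), hkey x, hkey y]; abel
    have h1 : p ((x + y)⁺ + (x⁻ + y⁻)) = p ((x + y)⁺) + (p x⁻ + p y⁻) := by
      rw [hadd _ _ (posPart_nonneg _) (add_nonneg (negPart_nonneg _) (negPart_nonneg _)),
        hadd _ _ (negPart_nonneg _) (negPart_nonneg _)]
    have h2 : p ((x + y)⁻ + (x⁺ + y⁺)) = p ((x + y)⁻) + (p x⁺ + p y⁺) := by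
      rw [hadd _ _ (negPart_nonneg _) (add_nonneg (posPart_nonneg _) (posPart_nonneg _)),
        hadd _ _ (posPart_nonneg _) (posPart_nonneg _)]
    rw [hid, h2] at h1
    simp only [hF0]
    linarith
  have hFbound : ∀ z : E, |F0 z| ≤ 2 * C' * ‖z‖ := by
    intro z
    simp only [hF0]
    calc |p z⁺ - p z⁻| ≤ |p z⁺| + |p z⁻| := abs_sub _ _
      _ ≤ C' * ‖z⁺‖ + C' * ‖z⁻‖ :=
        add_le_add (hbdd' _ (posPart_nonneg _)) (hbdd' _ (negPart_nonneg _))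
      _ ≤ C' * ‖z‖ + C' * ‖z‖ := add_le_add
        (mul_le_mul_of_nonneg_left (norm_posPart_le' z) hC0)
        (mul_le_mul_of_nonneg_left (norm_negPart_le' z) hC0)
      _ = 2 * C' * ‖z‖ := by ring
  have hFsub : ∀ x y : E, F0 (x - y) = F0 x - F0 y := by
    intro x y
    have := hFadd (x - y) y
    rw [sub_add_cancel] at this
    linarith
  have hcont : Continuous F0 := by
    refine (LipschitzWith.of_dist_le_mul (K := (2 * C').toNNReal) ?_).continuous
    intro x y
    rw [Real.coe_toNNReal _ (by positivity), Real.dist_eq, dist_eq_norm, ← hFsub]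
    exact hFbound (x - y)
  refine ⟨AddMonoidHom.toRealLinearMap (AddMonoidHom.mk' F0 hFadd) hcont, ?_⟩
  intro x hx
  show F0 x = p x
  simp only [hF0]
  rw [posPart_of_nonneg hx, negPart_of_nonneg hx, hp0, sub_zero]
end ConeCLM
section SupFun
variable {E : Type*} [NormedAddCommGroup E] [Lattice E] [HasSolidNorm E] [IsOrderedAddMonoid E] [NormedSpace ℝ E]

lemma clm_le_opNorm (g : E →L[ℝ] ℝ) (x : E) : g x ≤ ‖g‖ * ‖x‖ :=
  (le_abs_self _).trans (by rw [← Real.norm_eq_abs]; exact g.le_opNorm x)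

lemma posCLM_mono {g : E →L[ℝ] ℝ} (hg : ∀ z : E, 0 ≤ z → 0 ≤ g z) {a b : E} (hab : a ≤ b) :
    g a ≤ g b := by
  have := hg (b - a) (sub_nonneg.2 hab)
  rw [map_sub] at this
  linarith

structure IdealCone (S : Set E) : Prop where
  zero : (0 : E) ∈ S
  pos : ∀ y ∈ S, 0 ≤ y
  down : ∀ y ∈ S, ∀ z : E, 0 ≤ z → z ≤ y → z ∈ S
  addmem : ∀ y ∈ S, ∀ z ∈ S, y + z ∈ S

def supFun (g : E →L[ℝ] ℝ) (S : Set E) (x : E) : ℝ :=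
  sSup (g '' {y | y ∈ S ∧ y ≤ x})

variable {g : E →L[ℝ] ℝ} {S : Set E}

lemma supFun_bdd (hS : IdealCone S) (x : E) : BddAbove (g '' {y | y ∈ S ∧ y ≤ x}) := by
  refine ⟨‖g‖ * ‖x⁺‖, ?_⟩
  rintro r ⟨y, ⟨hyS, hyx⟩, rfl⟩
  have hy0 : 0 ≤ y := hS.pos y hyS
  have hyx' : y ≤ x⁺ := by
    have h : y⁺ ≤ x⁺ := posPart_mono hyx
    rwa [posPart_of_nonneg hy0] at h
  calc g y ≤ ‖g‖ * ‖y‖ := clm_le_opNorm g y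
    _ ≤ ‖g‖ * ‖x⁺‖ := mul_le_mul_of_nonneg_left (norm_of_le hy0 hyx') (norm_nonneg g)

lemma supFun_nonempty (hS : IdealCone S) {x : E} (hx : 0 ≤ x) :
    (g '' {y | y ∈ S ∧ y ≤ x}).Nonempty :=
  ⟨g 0, ⟨0, ⟨hS.zero, hx⟩, rfl⟩⟩

lemma le_supFun (hS : IdealCone S) {y x : E} (hy : y ∈ S) (hyx : y ≤ x) :
    g y ≤ supFun g S x :=
  le_csSup (supFun_bdd hS x) ⟨y, ⟨hy, hyx⟩, rfl⟩

lemma supFun_nonneg (hS : IdealCone S) {x : E} (hx : 0 ≤ x) : 0 ≤ supFun g S x := by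
  have := le_supFun (g := g) hS hS.zero hx
  rwa [map_zero] at this

lemma supFun_mono (hS : IdealCone S) {x x' : E} (hx : 0 ≤ x) (hxx : x ≤ x') :
    supFun g S x ≤ supFun g S x' := by
  refine csSup_le_csSup (supFun_bdd hS x') (supFun_nonempty hS hx) ?_
  rintro r ⟨y, ⟨hyS, hyx⟩, rfl⟩
  exact ⟨y, ⟨hyS, hyx.trans hxx⟩, rfl⟩

lemma supFun_mono_set {S' : Set E} (hS : IdealCone S) (hS' : IdealCone S') (hsub : S' ⊆ S)
    {x : E} (hx : 0 ≤ x) : supFun g S' x ≤ supFun g S x := by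
  refine csSup_le_csSup (supFun_bdd hS x) (supFun_nonempty hS' hx) ?_
  rintro r ⟨y, ⟨hyS, hyx⟩, rfl⟩
  exact ⟨y, ⟨hsub hyS, hyx⟩, rfl⟩

lemma supFun_abs_le (hS : IdealCone S) {x : E} (hx : 0 ≤ x) :
    |supFun g S x| ≤ ‖g‖ * ‖x‖ := by
  rw [abs_le]
  constructor
  · have h0 := supFun_nonneg (g := g) hS hx
    have : (0:ℝ) ≤ ‖g‖ * ‖x‖ := mul_nonneg (norm_nonneg _) (norm_nonneg _)
    linarith
  · refine csSup_le (supFun_nonempty hS hx) ?_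
    rintro r ⟨y, ⟨hyS, hyx⟩, rfl⟩
    calc g y ≤ ‖g‖ * ‖y‖ := clm_le_opNorm g y
      _ ≤ ‖g‖ * ‖x‖ := mul_le_mul_of_nonneg_left (norm_of_le (hS.pos y hyS) hyx) (norm_nonneg g)

lemma supFun_eval (hS : IdealCone S) (hg : ∀ z : E, 0 ≤ z → 0 ≤ g z) {y : E} (hy : y ∈ S) :
    supFun g S y = g y := by
  refine le_antisymm (csSup_le (supFun_nonempty hS (hS.pos y hy)) ?_) (le_supFun hS hy le_rfl)
  rintro r ⟨z, ⟨hzS, hzy⟩, rfl⟩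
  exact posCLM_mono hg hzy

lemma supFun_le_self (hS : IdealCone S) (hg : ∀ z : E, 0 ≤ z → 0 ≤ g z) {x : E} (hx : 0 ≤ x) :
    supFun g S x ≤ g x := by
  refine csSup_le (supFun_nonempty hS hx) ?_
  rintro r ⟨z, ⟨hzS, hzx⟩, rfl⟩
  exact posCLM_mono hg hzx

lemma supFun_add (hS : IdealCone S) {x y : E} (hx : 0 ≤ x) (hy : 0 ≤ y) :
    supFun g S (x + y) = supFun g S x + supFun g S y := by
  refine le_antisymm ?_ ?_
  · refine csSup_le (supFun_nonempty hS (add_nonneg hx hy)) ?_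
    rintro r ⟨z, ⟨hzS, hzxy⟩, rfl⟩
    have hz0 : 0 ≤ z := hS.pos z hzS
    set z₁ := z ⊓ x with hz₁
    set z₂ := z - z ⊓ x with hz₂
    have hz₁0 : 0 ≤ z₁ := le_inf hz0 hx
    have hz₁z : z₁ ≤ z := inf_le_left
    have hz₁S : z₁ ∈ S := hS.down z hzS z₁ hz₁0 hz₁z
    have hz₂p : z₂ = (z - x)⁺ := hlm1 z x
    have hz₂0 : 0 ≤ z₂ := by rw [hz₂p]; exact posPart_nonneg _
    have hz₂z : z₂ ≤ z := by
      rw [hz₂p]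
      exact le_trans (posPart_mono (sub_le_self z hx)) (le_of_eq (posPart_of_nonneg hz0))
    have hz₂S : z₂ ∈ S := hS.down z hzS z₂ hz₂0 hz₂z
    have hz₂y : z₂ ≤ y := by
      rw [hz₂p]
      refine le_trans (posPart_mono (sub_le_sub_right hzxy x)) (le_of_eq ?_)
      rw [add_sub_cancel_left]
      exact posPart_of_nonneg hy
    have hsum : g z = g z₁ + g z₂ := by rw [← map_add]; congr 1; simp [hz₁, hz₂]
    rw [hsum]
    exact add_le_add (le_supFun hS hz₁S inf_le_right) (le_supFun hS hz₂S hz₂y)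
  · have key : ∀ r1 ∈ g '' {w | w ∈ S ∧ w ≤ x}, r1 ≤ supFun g S (x + y) - supFun g S y := by
      rintro r1 ⟨z1, ⟨h1S, h1x⟩, rfl⟩
      rw [le_sub_iff_add_le, add_comm, ← le_sub_iff_add_le]
      refine csSup_le (supFun_nonempty hS hy) ?_
      rintro r2 ⟨z2, ⟨h2S, h2y⟩, rfl⟩
      rw [le_sub_iff_add_le, add_comm, ← map_add]
      exact le_supFun hS (hS.addmem z1 h1S z2 h2S) (add_le_add h1x h2y)
    have h := csSup_le (supFun_nonempty (g := g) hS hx) key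
    have : supFun g S x ≤ supFun g S (x + y) - supFun g S y := h
    linarith

lemma supCLM (g : E →L[ℝ] ℝ) (hS : IdealCone S) :
    ∃ F : E →L[ℝ] ℝ, ∀ x : E, 0 ≤ x → F x = supFun g S x := by
  refine coneCLM (supFun g S) ‖g‖ (fun x y hx hy => supFun_add hS hx hy)
    (fun x hx => supFun_abs_le hS hx)

end SupFun

end MyHelpers

section MyOCP
set_option linter.unusedSectionVars false

lemma ocp_zero : (0 : X) ∈ OrderContPart X := by
  intro D g hg _hconv ε hε
  obtain ⟨i⟩ := D.nonempty
  refine ⟨i, fun j _ => ?_⟩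
  have h0 : |g j| ≤ 0 := by simpa using hg j
  have : g j = 0 := by
    have h1 : g j ≤ 0 := (le_abs_self _).trans h0
    have h2 : -g j ≤ 0 := (neg_le_abs _).trans h0
    exact le_antisymm h1 (neg_nonpos.1 h2)
  simpa [this] using hε

lemma ocp_solid {a b : X} (hb : b ∈ OrderContPart X) (hab : |a| ≤ |b|) :
    a ∈ OrderContPart X := fun D g hg hconv => hb D g (fun i => (hg i).trans hab) hconv

lemma ocp_add {a b : X} (ha : a ∈ OrderContPart X) (hb : b ∈ OrderContPart X) :
    a + b ∈ OrderContPart X := by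
  intro D g hg hconv
  obtain ⟨E, h, hanti, hglb, hdom⟩ := hconv
  have hh0 : ∀ γ, (0:X) ≤ h γ := fun γ => hglb.1 ⟨γ, rfl⟩
  set u : D.ι → X := fun i => (g i ⊓ |a|) ⊔ (-|a|) with hu
  set v : D.ι → X := fun i => g i - u i with hv
  have hua : ∀ i, |u i| ≤ |a| := by
    intro i
    rw [abs_le']
    exact ⟨sup_le inf_le_right (neg_le_self (abs_nonneg a)), neg_le.mpr le_sup_right⟩
  have hug : ∀ i, |u i| ≤ |g i| := by
    intro i
    rw [abs_le']
    constructor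
    · exact sup_le (inf_le_left.trans (le_abs_self _)) ((neg_nonpos.2 (abs_nonneg _)).trans (abs_nonneg _))
    · exact neg_le.mpr (le_trans (le_inf (myNegAbsLe _) ((neg_nonpos.2 (abs_nonneg _)).trans (abs_nonneg a))) le_sup_left)
  have hvb : ∀ i, |v i| ≤ |b| := by
    intro i
    have hgb : |g i| ≤ |a| + |b| := (hg i).trans (abs_add_le a b)
    have hveq : v i = (g i - g i ⊓ |a|) ⊓ (g i + |a|) := by
      simp only [hv, hu, sub_sup, sub_neg_eq_add]
    rw [abs_le']
    constructor
    · rw [hveq]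
      refine inf_le_left.trans ?_
      rw [hlm1]
      have h2 : (g i - |a|)⁺ ≤ (|a| + |b| - |a|)⁺ :=
        posPart_mono (sub_le_sub_right ((le_abs_self _).trans hgb) _)
      refine h2.trans (le_of_eq ?_)
      rw [add_sub_cancel_left]
      exact posPart_of_nonneg (abs_nonneg b)
    · refine neg_le.mpr ?_
      rw [hveq]
      refine le_inf ?_ ?_
      · rw [hlm1]
        exact (neg_nonpos.2 (abs_nonneg b)).trans (posPart_nonneg _)
      · have h1 : -(|a| + |b|) ≤ g i := (neg_le_neg hgb).trans (myNegAbsLe _)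
        have h2 := add_le_add h1 (le_refl |a|)
        have h3 : -(|a| + |b|) + |a| = -|b| := by abel
        rwa [h3] at h2
  have hconvu : OrderConvNet D u 0 := by
    refine ⟨E, h, hanti, hglb, fun γ => ?_⟩
    obtain ⟨i₀, hi₀⟩ := hdom γ
    refine ⟨i₀, fun i hi => ?_⟩
    rw [sub_zero]
    have hgi := hi₀ i hi
    rw [sub_zero] at hgi
    exact (hug i).trans hgi
  set h2 : E.ι → X := fun γ => h γ + h γ with hh2
  have habs_sub : ∀ i, |v i| ≤ |g i| + |u i| := by
    intro i
    have := abs_add_le (g i) (-u i)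
    rw [← sub_eq_add_neg, abs_neg] at this
    exact this
  have hconvv : OrderConvNet D v 0 := by
    refine ⟨E, h2, ?_, ?_, ?_⟩
    · intro γ₁ γ₂ hr
      exact add_le_add (hanti _ _ hr) (hanti _ _ hr)
    · constructor
      · rintro z ⟨γ, rfl⟩
        exact add_nonneg (hh0 γ) (hh0 γ)
      · intro c hc
        have key : ∀ γ', c - h γ' ≤ 0 := by
          intro γ'
          refine hglb.2 ?_
          rintro z ⟨γ, rfl⟩
          obtain ⟨γ'', hγa, hγb⟩ := E.directed γ γ'
          have h0 := hc ⟨γ'', rfl⟩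
          have hcc : c ≤ h γ + h γ' := h0.trans (add_le_add (hanti _ _ hγa) (hanti _ _ hγb))
          exact sub_le_iff_le_add.2 hcc
        have key2 : c ∈ lowerBounds (Set.range h) := by
          rintro z ⟨γ', rfl⟩
          exact sub_nonpos.1 (key γ')
        exact hglb.2 key2
    · intro γ
      obtain ⟨i₀, hi₀⟩ := hdom γ
      refine ⟨i₀, fun i hi => ?_⟩
      rw [sub_zero]
      have hgi := hi₀ i hi
      rw [sub_zero] at hgi
      exact (habs_sub i).trans (add_le_add hgi ((hug i).trans hgi))
  have Hu := ha D u hua hconvu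
  have Hv := hb D v hvb hconvv
  intro ε hε
  obtain ⟨i₁, hi₁⟩ := Hu (ε/2) (by linarith)
  obtain ⟨i₂, hi₂⟩ := Hv (ε/2) (by linarith)
  obtain ⟨i₀, ha1, ha2⟩ := D.directed i₁ i₂
  refine ⟨i₀, fun i hi => ?_⟩
  have hu1 := hi₁ i (D.trans _ _ _ ha1 hi)
  have hv1 := hi₂ i (D.trans _ _ _ ha2 hi)
  rw [abs_of_nonneg (norm_nonneg _)] at hu1 hv1 ⊢
  have hgi : g i = u i + v i := by simp [hv]
  calc ‖g i‖ = ‖u i + v i‖ := by rw [← hgi]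
    _ ≤ ‖u i‖ + ‖v i‖ := norm_add_le _ _
    _ < ε := by linarith

lemma supFun_abs_bound {S : Set X} (hS : IdealCone S) (φ F : X →L[ℝ] ℝ)
    (hF : ∀ x : X, 0 ≤ x → F x = supFun φ S x) (z : X) : |F z| ≤ supFun φ S |z| := by
  have hz : F z = F z⁺ - F z⁻ := by rw [← map_sub]; congr 1; rw [posPart_sub_negPart]
  have h1 : 0 ≤ F z⁺ := by rw [hF _ (posPart_nonneg z)]; exact supFun_nonneg hS (posPart_nonneg z)
  have h2 : 0 ≤ F z⁻ := by rw [hF _ (negPart_nonneg z)]; exact supFun_nonneg hS (negPart_nonneg z)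
  have h3 : F z⁺ ≤ supFun φ S |z| := by
    rw [hF _ (posPart_nonneg z)]
    exact supFun_mono hS (posPart_nonneg z) (posPart_le_abs' z)
  have h4 : F z⁻ ≤ supFun φ S |z| := by
    rw [hF _ (negPart_nonneg z)]
    exact supFun_mono hS (negPart_nonneg z) (negPart_le_abs' z)
  rw [hz, abs_le]
  constructor <;> linarith

lemma hatOC {S : Set X} (hS : IdealCone S) (hSocp : ∀ y ∈ S, y ∈ OrderContPart X)
    (φ F : X →L[ℝ] ℝ) (hφ : ∀ z : X, 0 ≤ z → 0 ≤ φ z)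
    (hF : ∀ x : X, 0 ≤ x → F x = supFun φ S x) : InOCDual F := by
  intro D f hconv
  obtain ⟨E, h, hanti, hglb, hdom⟩ := hconv
  have hh0 : ∀ γ, (0:X) ≤ h γ := fun γ => hglb.1 ⟨γ, rfl⟩
  have step2 : ∀ δ : ℝ, 0 < δ → ∃ γ, supFun φ S (h γ) < δ := by
    intro δ hδ
    obtain ⟨γ₀⟩ := E.nonempty
    have hne := supFun_nonempty (g := φ) hS (hh0 γ₀)
    have hlt : supFun φ S (h γ₀) - δ/3 < supFun φ S (h γ₀) := by
      have : (0:ℝ) < δ/3 := by linarith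
      linarith
    obtain ⟨r, hrmem, hr⟩ := exists_lt_of_lt_csSup hne hlt
    obtain ⟨y, ⟨hyS, hyh⟩, rfl⟩ := hrmem
    have hy0 : 0 ≤ y := hS.pos y hyS
    have hkey : ∀ γ, E.r γ₀ γ → supFun φ S (h γ) ≤ φ (y ⊓ h γ) + δ/3 := by
      intro γ hγ
      refine csSup_le (supFun_nonempty hS (hh0 γ)) ?_
      rintro r ⟨z, ⟨hzS, hzh⟩, rfl⟩
      have hz0 : 0 ≤ z := hS.pos z hzS
      have hsplit : φ z = φ (z ⊓ y) + φ (z - z ⊓ y) := by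
        rw [← map_add]
        congr 1
        abel
      have h1 : φ (z ⊓ y) ≤ φ (y ⊓ h γ) :=
        posCLM_mono hφ (le_inf inf_le_right (inf_le_left.trans hzh))
      have h2 : φ (z - z ⊓ y) ≤ δ/3 := by
        have hm : z - z ⊓ y = (z - y)⁺ := hlm1 z y
        have hmemz : (z - y)⁺ ≤ z := by
          have hp : (z - y)⁺ ≤ z⁺ := posPart_mono (sub_le_self z hy0)
          rwa [posPart_of_nonneg hz0] at hp
        have hmem : (z - y)⁺ ∈ S := hS.down z hzS _ (posPart_nonneg _) hmemz
        have hle : (z - y)⁺ ≤ h γ₀ - y := by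
          have hzz : (z - y)⁺ ≤ (h γ₀ - y)⁺ :=
            posPart_mono (sub_le_sub_right (hzh.trans (hanti _ _ hγ)) y)
          rwa [posPart_of_nonneg (sub_nonneg.2 hyh)] at hzz
        have hbound : φ ((z - y)⁺) ≤ supFun φ S (h γ₀ - y) := le_supFun hS hmem hle
        have hdecomp : supFun φ S (h γ₀ - y) + φ y = supFun φ S (h γ₀) := by
          have hadd := supFun_add (g := φ) hS (sub_nonneg.2 hyh) hy0
          rw [sub_add_cancel] at hadd
          rw [hadd, supFun_eval hS hφ hyS]
        rw [hm]
        linarith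
      linarith
    have hocp := hSocp y hyS
    have hnet : NetTendstoZero E (fun γ => ‖y ⊓ h γ‖) := by
      refine hocp E (fun γ => y ⊓ h γ) ?_ ?_
      · intro γ
        rw [abs_of_nonneg (le_inf hy0 (hh0 γ)), abs_of_nonneg hy0]
        exact inf_le_left
      · refine ⟨E, fun γ => y ⊓ h γ, ?_, ?_, ?_⟩
        · intro γ₁ γ₂ hr
          exact inf_le_inf_left y (hanti _ _ hr)
        · constructor
          · rintro z ⟨γ, rfl⟩
            exact le_inf hy0 (hh0 γ)
          · intro c hc
            refine hglb.2 ?_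
            rintro z ⟨γ, rfl⟩
            exact (hc ⟨γ, rfl⟩).trans inf_le_right
        · intro γ
          refine ⟨γ, fun γ' hγ' => ?_⟩
          rw [sub_zero, abs_of_nonneg (le_inf hy0 (hh0 γ'))]
          exact inf_le_inf_left y (hanti _ _ hγ')
    obtain ⟨γ₁, hγ₁⟩ := hnet (δ/(3 * (‖φ‖ + 1))) (by positivity)
    obtain ⟨γ₂, hγ₂a, hγ₂b⟩ := E.directed γ₀ γ₁
    refine ⟨γ₂, ?_⟩
    have hik := hkey γ₂ hγ₂a
    have hn := hγ₁ γ₂ hγ₂b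
    rw [abs_of_nonneg (norm_nonneg _)] at hn
    have hφb : φ (y ⊓ h γ₂) ≤ ‖φ‖ * ‖y ⊓ h γ₂‖ := clm_le_opNorm _ _
    have hφn : (0:ℝ) ≤ ‖φ‖ := norm_nonneg _
    have hmul : ‖φ‖ * ‖y ⊓ h γ₂‖ ≤ ‖φ‖ * (δ/(3 * (‖φ‖ + 1))) :=
      mul_le_mul_of_nonneg_left hn.le hφn
    have hfrac : ‖φ‖ * (δ/(3 * (‖φ‖ + 1))) < δ/3 * 1 := by
      rw [mul_comm]
      rw [div_mul_eq_mul_div, mul_one]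
      rw [div_lt_iff₀ (by positivity)]
      have : δ/3 * (3 * (‖φ‖ + 1)) = δ * (‖φ‖ + 1) := by ring
      rw [this]
      have : δ * ‖φ‖ < δ * (‖φ‖ + 1) := by nlinarith
      nlinarith
    have : supFun φ S (h γ₂) ≤ δ/3 + δ/3 + 0 := by nlinarith
    linarith
  intro ε hε
  obtain ⟨γ, hγ⟩ := step2 ε hε
  obtain ⟨i₀, hi₀⟩ := hdom γ
  refine ⟨i₀, fun i hi => ?_⟩
  have h1 := supFun_abs_bound hS φ F hF (f i)
  have hfi := hi₀ i hi
  rw [sub_zero] at hfi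
  have h2 : supFun φ S |f i| ≤ supFun φ S (h γ) := supFun_mono hS (abs_nonneg _) hfi
  calc |F (f i)| ≤ supFun φ S |f i| := h1
    _ ≤ supFun φ S (h γ) := h2
    _ < ε := hγ

end MyOCP

section WeakNull
set_option linter.unusedSectionVars false
variable {E : Type*} [NormedAddCommGroup E] [Lattice E] [HasSolidNorm E] [IsOrderedAddMonoid E] [NormedSpace ℝ E]

def finDir : DirectedType where
  ι := Finset ℕ
  r := (· ⊆ ·)
  nonempty := ⟨∅⟩
  refl := fun _ => subset_rfl
  trans := fun _ _ _ h1 h2 => h1.trans h2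
  directed := fun a b => ⟨a ∪ b, Finset.subset_union_left, Finset.subset_union_right⟩

lemma coneIdeal : IdealCone {y : E | 0 ≤ y} :=
  ⟨le_rfl, fun _ hy => hy, fun _ _ z hz _ => hz, fun _ hy _ hz => add_nonneg hy hz⟩

lemma disjCone (e : ℕ → E) (he0 : ∀ n, 0 ≤ e n) (A : Finset ℕ) :
    IdealCone {y : E | 0 ≤ y ∧ ∀ k ∈ A, y ⊓ e k = 0} := by
  refine ⟨⟨le_rfl, fun k _ => inf_eq_left.2 (he0 k)⟩, fun y hy => hy.1, ?_, ?_⟩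
  · rintro y ⟨hy0, hyd⟩ z hz0 hzy
    refine ⟨hz0, fun k hk => le_antisymm ?_ (le_inf hz0 (he0 k))⟩
    calc z ⊓ e k ≤ y ⊓ e k := inf_le_inf_right _ hzy
      _ = 0 := hyd k hk
  · rintro y ⟨hy0, hyd⟩ z ⟨hz0, hzd⟩
    refine ⟨add_nonneg hy0 hz0, fun k hk => le_antisymm ?_ (le_inf (add_nonneg hy0 hz0) (he0 k))⟩
    calc (y + z) ⊓ e k ≤ y ⊓ e k + z ⊓ e k := hlm3 hy0 hz0 (he0 k)
      _ = 0 := by rw [hyd k hk, hzd k hk, add_zero]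

lemma pos_disjoint_null (hE : DualOCOn (Set.univ : Set (E →L[ℝ] ℝ)))
    (e : ℕ → E) (he0 : ∀ n, 0 ≤ e n) (M : ℝ) (heb : ∀ n, ‖e n‖ ≤ M)
    (hdisj : ∀ n m : ℕ, n ≠ m → e n ⊓ e m = 0)
    (P : E →L[ℝ] ℝ) (hP : ∀ z : E, 0 ≤ z → 0 ≤ P z) :
    Tendsto (fun n => P (e n)) atTop (𝓝 0) := by
  classical
  set S : Finset ℕ → Set E := fun A => {y : E | 0 ≤ y ∧ ∀ k ∈ A, y ⊓ e k = 0} with hSdef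
  have hSI : ∀ A, IdealCone (S A) := disjCone e he0
  have hFex : ∀ A : Finset ℕ, ∃ F : E →L[ℝ] ℝ, ∀ x : E, 0 ≤ x → F x = supFun P (S A) x :=
    fun A => supCLM P (hSI A)
  choose F hFs using hFex
  have hFmono : ∀ (A B : Finset ℕ), A ⊆ B → ∀ x : E, 0 ≤ x → F B x ≤ F A x := by
    intro A B hAB x hx
    rw [hFs A x hx, hFs B x hx]
    refine supFun_mono_set (hSI A) (hSI B) ?_ hx
    rintro y ⟨hy0, hyd⟩
    exact ⟨hy0, fun k hk => hyd k (hAB hk)⟩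
  set j : E → ℝ := fun x => sInf (Set.range fun A => F A x) with hjdef
  have hbdd : ∀ x : E, 0 ≤ x → BddBelow (Set.range fun A => F A x) := by
    intro x hx
    refine ⟨0, ?_⟩
    rintro r ⟨A, rfl⟩
    dsimp only
    rw [hFs A x hx]
    exact supFun_nonneg (hSI A) hx
  have hjle : ∀ (A : Finset ℕ) (x : E), 0 ≤ x → j x ≤ F A x := fun A x hx =>
    csInf_le (hbdd x hx) ⟨A, rfl⟩
  have hj0 : ∀ x : E, 0 ≤ x → 0 ≤ j x := by
    intro x hx
    refine le_csInf ⟨F ∅ x, ⟨∅, rfl⟩⟩ ?_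
    rintro r ⟨A, rfl⟩
    dsimp only
    rw [hFs A x hx]
    exact supFun_nonneg (hSI A) hx
  have hjadd : ∀ x y : E, 0 ≤ x → 0 ≤ y → j (x + y) = j x + j y := by
    intro x y hx hy
    refine le_antisymm ?_ ?_
    · rw [← sub_le_iff_le_add]
      refine le_csInf ⟨F ∅ x, ⟨∅, rfl⟩⟩ ?_
      rintro r ⟨A, rfl⟩
      dsimp only
      rw [sub_le_iff_le_add, add_comm (F A x), ← sub_le_iff_le_add]
      refine le_csInf ⟨F ∅ y, ⟨∅, rfl⟩⟩ ?_
      rintro r ⟨B, rfl⟩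
      dsimp only
      rw [sub_le_iff_le_add, add_comm (F B y)]
      have h1 : j (x+y) ≤ F (A ∪ B) (x+y) := hjle _ _ (add_nonneg hx hy)
      have h2 : F (A ∪ B) (x + y) = F (A ∪ B) x + F (A ∪ B) y := map_add _ _ _
      have h3 : F (A ∪ B) x ≤ F A x := hFmono A (A ∪ B) Finset.subset_union_left x hx
      have h4 : F (A ∪ B) y ≤ F B y := hFmono B (A ∪ B) Finset.subset_union_right y hy
      linarith
    · refine le_csInf ⟨F ∅ (x+y), ⟨∅, rfl⟩⟩ ?_
      rintro r ⟨A, rfl⟩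
      dsimp only
      have h2 : F A (x + y) = F A x + F A y := map_add _ _ _
      linarith [hjle A x hx, hjle A y hy]
  have hjbdd : ∀ x : E, 0 ≤ x → |j x| ≤ ‖F ∅‖ * ‖x‖ := by
    intro x hx
    rw [abs_le]
    constructor
    · have h0 : (0:ℝ) ≤ ‖F ∅‖ * ‖x‖ := by positivity
      linarith [hj0 x hx]
    · exact (hjle ∅ x hx).trans (clm_le_opNorm _ _)
  obtain ⟨Ψ, hΨ⟩ := coneCLM j ‖F ∅‖ hjadd hjbdd
  have hnet : NetTendstoZero finDir fun A => ‖F A - Ψ‖ := by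
    refine hE finDir (fun A => F A - Ψ) (fun _ => trivial) ?_ ?_ ?_
    · intro A B hAB x hx
      simp only [ContinuousLinearMap.sub_apply]
      have := hFmono A B hAB x hx
      linarith
    · intro A x hx
      simp only [ContinuousLinearMap.sub_apply, ContinuousLinearMap.zero_apply]
      rw [hΨ x hx]
      linarith [hjle A x hx]
    · intro hfun _ hlow x hx
      simp only [ContinuousLinearMap.zero_apply]
      have hall : ∀ A, hfun x + j x ≤ F A x := by
        intro A
        have h := hlow A x hx
        simp only [ContinuousLinearMap.sub_apply] at h
        rw [hΨ x hx] at h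
        linarith
      have h2 : hfun x + j x ≤ j x := by
        refine le_csInf ⟨F ∅ x, ⟨∅, rfl⟩⟩ ?_
        rintro r ⟨A, rfl⟩
        dsimp only
        exact hall A
      linarith
  rw [Metric.tendsto_atTop]
  intro ε hε
  have hM0 : (0:ℝ) ≤ M := (norm_nonneg _).trans (heb 0)
  obtain ⟨A₀', hA₀'⟩ := hnet (ε/(M+1)) (by positivity)
  let A₀ : Finset ℕ := A₀'
  have hA₀ : ∀ A : Finset ℕ, A₀ ⊆ A → |‖F A - Ψ‖| < ε/(M+1) := fun A hA => hA₀' A hA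
  refine ⟨(A₀.sup id) + 1, fun n hn => ?_⟩
  have hnA : n ∉ A₀ := by
    intro hmem
    have := Finset.le_sup (f := id) hmem
    simp only [id] at this
    omega
  have hmemS : e n ∈ S A₀ := ⟨he0 n, fun k hk => hdisj n k (fun h => hnA (h ▸ hk))⟩
  have hFA : F A₀ (e n) = P (e n) := by
    rw [hFs _ _ (he0 n)]
    exact le_antisymm (supFun_le_self (hSI A₀) hP (he0 n)) (le_supFun (hSI A₀) hmemS le_rfl)
  have hΨen : Ψ (e n) = 0 := by
    rw [hΨ _ (he0 n)]
    refine le_antisymm ?_ (hj0 _ (he0 n))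
    have h1 : j (e n) ≤ F {n} (e n) := hjle {n} _ (he0 n)
    have h2 : F {n} (e n) = 0 := by
      rw [hFs _ _ (he0 n)]
      refine le_antisymm ?_ (supFun_nonneg (hSI {n}) (he0 n))
      refine csSup_le (supFun_nonempty (hSI {n}) (he0 n)) ?_
      rintro r ⟨z, ⟨⟨hz0, hzd⟩, hzle⟩, rfl⟩
      have hz : z = 0 := by
        have hd := hzd n (Finset.mem_singleton_self n)
        rwa [inf_eq_left.2 hzle] at hd
      rw [hz, map_zero]
    linarith
  have hA := hA₀ A₀ subset_rfl
  rw [abs_of_nonneg (norm_nonneg _)] at hA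
  have hb1 : P (e n) = (F A₀ - Ψ) (e n) := by
    simp only [ContinuousLinearMap.sub_apply, hFA, hΨen, sub_zero]
  have hb2 : (F A₀ - Ψ) (e n) ≤ ‖F A₀ - Ψ‖ * ‖e n‖ := clm_le_opNorm _ _
  rw [Real.dist_eq, sub_zero, abs_of_nonneg (hP _ (he0 n))]
  have hmul : ‖F A₀ - Ψ‖ * ‖e n‖ ≤ ‖F A₀ - Ψ‖ * M :=
    mul_le_mul_of_nonneg_left (heb n) (norm_nonneg _)
  have hmul2 : ‖F A₀ - Ψ‖ * M < ε := by
    have h1 : ‖F A₀ - Ψ‖ * M ≤ (ε/(M+1)) * M := mul_le_mul_of_nonneg_right hA.le hM0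
    have h2 : (ε/(M+1)) * M < ε := by
      rw [div_mul_eq_mul_div, div_lt_iff₀ (by positivity)]
      nlinarith
    linarith
  linarith [hb1 ▸ hb2]

lemma disjoint_weakly_null (hE : DualOCOn (Set.univ : Set (E →L[ℝ] ℝ)))
    (e : ℕ → E) (he0 : ∀ n, 0 ≤ e n) (M : ℝ) (heb : ∀ n, ‖e n‖ ≤ M)
    (hdisj : ∀ n m : ℕ, n ≠ m → e n ⊓ e m = 0) (ρ : E →L[ℝ] ℝ) :
    Tendsto (fun n => ρ (e n)) atTop (𝓝 0) := by
  obtain ⟨Gp, hGp⟩ := supCLM (S := {y : E | 0 ≤ y}) ρ coneIdeal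
  obtain ⟨Gm, hGm⟩ := supCLM (S := {y : E | 0 ≤ y}) (-ρ) coneIdeal
  set P := Gp + Gm with hPdef
  have h3 : ∀ z : E, 0 ≤ z → 0 ≤ Gp z := by
    intro z hz
    rw [hGp z hz]
    exact supFun_nonneg coneIdeal hz
  have h4 : ∀ z : E, 0 ≤ z → 0 ≤ Gm z := by
    intro z hz
    rw [hGm z hz]
    exact supFun_nonneg coneIdeal hz
  have hPpos : ∀ z : E, 0 ≤ z → 0 ≤ P z := by
    intro z hz
    simp only [hPdef, ContinuousLinearMap.add_apply]
    linarith [h3 z hz, h4 z hz]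
  have hdom : ∀ z : E, 0 ≤ z → |ρ z| ≤ P z := by
    intro z hz
    have h1 : ρ z ≤ Gp z := by
      rw [hGp z hz]
      exact le_supFun coneIdeal hz le_rfl
    have h2 : -ρ z ≤ Gm z := by
      rw [hGm z hz]
      have h5 := le_supFun (g := -ρ) (S := {y : E | 0 ≤ y}) coneIdeal hz le_rfl
      simpa using h5
    rw [abs_le]
    constructor
    · simp only [hPdef, ContinuousLinearMap.add_apply]
      linarith [h3 z hz]
    · simp only [hPdef, ContinuousLinearMap.add_apply]
      linarith [h4 z hz]
  have hPnull := pos_disjoint_null hE e he0 M heb hdisj P hPpos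
  refine squeeze_zero_norm (fun n => ?_) hPnull
  rw [Real.norm_eq_abs]
  exact hdom _ (he0 n)

end WeakNull

/-- if the quotient `X / X_a` (realized as a Banach lattice `Q` with
quotient lattice homomorphism `q` whose kernel is `X_a` and whose norm is the
quotient norm) has order continuous dual, then `X` has `DOCP`. -/
theorem stmt9 {X Q : Type*}
    [NormedAddCommGroup X] [Lattice X] [HasSolidNorm X] [IsOrderedAddMonoid X]
    [NormedSpace ℝ X] [CompleteSpace X]
    [NormedAddCommGroup Q] [Lattice Q] [HasSolidNorm Q] [IsOrderedAddMonoid Q]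
    [NormedSpace ℝ Q] [CompleteSpace Q]
    (q : X →ₗ[ℝ] Q)
    (hlat : ∀ x y : X, q (x ⊔ y) = q x ⊔ q y)
    (hker : ∀ x : X, q x = 0 ↔ x ∈ OrderContPart X)
    (hsurj : Function.Surjective q)
    (hnorm : ∀ x : X, ‖q x‖ = sInf {c : ℝ | ∃ y : X, q y = q x ∧ c = ‖y‖})
    (hQ : DualOrderContinuous Q) :
    DOCP X := by
  classical
  intro f hf0 hfb hfdisj hσ
  obtain ⟨M, hM⟩ := hfb
  -- push facts through q
  have hq0 : ∀ x : X, 0 ≤ x → 0 ≤ q x := by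
    intro x hx
    have h1 : q (x ⊔ 0) = q x ⊔ q 0 := hlat x 0
    rw [map_zero, sup_eq_left.2 hx] at h1
    exact le_sup_right.trans_eq h1.symm
  have hqinf : ∀ x y : X, q (x ⊓ y) = q x ⊓ q y := by
    intro x y
    have h1 : x ⊓ y = x + y - (x ⊔ y) := by
      rw [eq_sub_iff_add_eq, inf_add_sup]
    have h2 : q x ⊓ q y = q x + q y - (q x ⊔ q y) := by
      rw [eq_sub_iff_add_eq, inf_add_sup]
    rw [h1, map_sub, map_add, hlat, h2]
  have hqdisj : ∀ n m : ℕ, n ≠ m → q (f n) ⊓ q (f m) = 0 := by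
    intro n m hnm
    rw [← hqinf, hfdisj n m hnm, map_zero]
  have hqb : ∀ n, ‖q (f n)‖ ≤ M := by
    intro n
    rw [hnorm (f n)]
    have hle : sInf {c : ℝ | ∃ y : X, q y = q (f n) ∧ c = ‖y‖} ≤ ‖f n‖ := by
      refine csInf_le ⟨0, ?_⟩ ⟨f n, rfl, rfl⟩
      rintro c ⟨y, _, rfl⟩
      exact norm_nonneg y
    exact hle.trans (hM n)
  have hQnull : ∀ ρ : Q →L[ℝ] ℝ, Tendsto (fun n => ρ (q (f n))) atTop (𝓝 0) :=
    fun ρ => disjoint_weakly_null hQ (fun n => q (f n)) (fun n => hq0 _ (hf0 n)) M hqb hqdisj ρ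
  -- the ideal cone of order continuous elements
  set S₂ : Set X := {y : X | 0 ≤ y ∧ y ∈ OrderContPart X} with hS₂def
  have hS₂ : IdealCone S₂ := by
    refine ⟨⟨le_rfl, ocp_zero⟩, fun y hy => hy.1, ?_, ?_⟩
    · rintro y ⟨hy0, hyo⟩ z hz0 hzy
      refine ⟨hz0, ocp_solid hyo ?_⟩
      rw [abs_of_nonneg hz0, abs_of_nonneg hy0]
      exact hzy
    · rintro y ⟨hy0, hyo⟩ z ⟨hz0, hzo⟩
      exact ⟨add_nonneg hy0 hz0, ocp_add hyo hzo⟩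
  intro g
  -- dominate g by a positive functional
  obtain ⟨Gp, hGp⟩ := supCLM (S := {y : X | 0 ≤ y}) g coneIdeal
  obtain ⟨Gm, hGm⟩ := supCLM (S := {y : X | 0 ≤ y}) (-g) coneIdeal
  set φ := Gp + Gm with hφdef
  have h3 : ∀ z : X, 0 ≤ z → 0 ≤ Gp z := by
    intro z hz
    rw [hGp z hz]
    exact supFun_nonneg coneIdeal hz
  have h4 : ∀ z : X, 0 ≤ z → 0 ≤ Gm z := by
    intro z hz
    rw [hGm z hz]
    exact supFun_nonneg coneIdeal hz
  have hφpos : ∀ z : X, 0 ≤ z → 0 ≤ φ z := by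
    intro z hz
    simp only [hφdef, ContinuousLinearMap.add_apply]
    linarith [h3 z hz, h4 z hz]
  have hφdom : ∀ z : X, 0 ≤ z → |g z| ≤ φ z := by
    intro z hz
    have h1 : g z ≤ Gp z := by
      rw [hGp z hz]
      exact le_supFun coneIdeal hz le_rfl
    have h2 : -g z ≤ Gm z := by
      rw [hGm z hz]
      have h5 := le_supFun (g := -g) (S := {y : X | 0 ≤ y}) coneIdeal hz le_rfl
      simpa using h5
    rw [abs_le]
    constructor
    · simp only [hφdef, ContinuousLinearMap.add_apply]
      linarith [h3 z hz]
    · simp only [hφdef, ContinuousLinearMap.add_apply]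
      linarith [h4 z hz]
  suffices hT : Tendsto (fun n => φ (f n)) atTop (𝓝 0) by
    refine squeeze_zero_norm (fun n => ?_) hT
    rw [Real.norm_eq_abs]
    exact hφdom _ (hf0 n)
  -- the order continuous component of φ
  obtain ⟨Fh, hFh⟩ := supCLM (S := S₂) φ hS₂
  have hFoc : InOCDual Fh := hatOC hS₂ (fun y hy => hy.2) φ Fh hφpos hFh
  have hFf := hσ Fh hFoc
  rw [Metric.tendsto_atTop]
  intro ε hε
  by_contra hcon
  push_neg at hcon
  obtain ⟨N₀, hN₀⟩ := Metric.tendsto_atTop.1 hFf (ε/4) (by linarith)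
  have hFfn : ∀ n, N₀ ≤ n → Fh (f n) < ε/4 := by
    intro n hn
    have h := hN₀ n hn
    rw [Real.dist_eq, sub_zero] at h
    have hpos : 0 ≤ Fh (f n) := by
      rw [hFh _ (hf0 n)]
      exact supFun_nonneg hS₂ (hf0 n)
    rwa [abs_of_nonneg hpos] at h
  set T : Set ℕ := {n | N₀ ≤ n ∧ ε ≤ φ (f n)} with hTdef
  have hTun : ∀ N : ℕ, ∃ n, N ≤ n ∧ n ∈ T := by
    intro N
    obtain ⟨n, hn1, hn2⟩ := hcon (max N N₀)
    rw [Real.dist_eq, sub_zero, abs_of_nonneg (hφpos _ (hf0 n))] at hn2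
    exact ⟨n, (le_max_left _ _).trans hn1, (le_max_right _ _).trans hn1, hn2⟩
  set ε' : ℝ := ε/(4*(‖φ‖+1)) with hε'def
  have hε' : 0 < ε' := by positivity
  set Cset : Set Q := closure (convexHull ℝ ((fun n => q (f n)) '' T)) with hCdef
  have h0C : (0 : Q) ∈ Cset := by
    by_contra h0
    obtain ⟨ρ, u, hρ1, hρ2⟩ :=
      geometric_hahn_banach_closed_point ((convex_convexHull ℝ _).closure) isClosed_closure h0
    rw [map_zero] at hρ2
    have hten := hQnull ρ
    rw [Metric.tendsto_atTop] at hten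
    obtain ⟨N₁, hN₁⟩ := hten (-u) (by linarith)
    obtain ⟨n, hn1, hn2⟩ := hTun N₁
    have hmem : q (f n) ∈ Cset := subset_closure (subset_convexHull ℝ _ ⟨n, hn2, rfl⟩)
    have h5 := hρ1 _ hmem
    have h6 := hN₁ n hn1
    rw [Real.dist_eq, sub_zero] at h6
    have h7 := abs_lt.1 h6
    linarith [h7.1]
  obtain ⟨u', hu'mem, hu'n⟩ := Metric.mem_closure_iff.1 h0C ε' hε'
  rw [dist_zero_left] at hu'n
  rw [convexHull_eq] at hu'mem
  obtain ⟨ι, t, w, z, hw0, hw1, hz, hcm⟩ := hu'mem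
  rw [Finset.centerMass_eq_of_sum_1 _ _ hw1] at hcm
  have hzch : ∀ i : ι, ∃ n : ℕ, i ∈ t → (n ∈ T ∧ q (f n) = z i) := by
    intro i
    by_cases hi : i ∈ t
    · obtain ⟨n, hn, hqn⟩ := hz i hi
      exact ⟨n, fun _ => ⟨hn, hqn⟩⟩
    · exact ⟨0, fun h => absurd h hi⟩
  choose m hm using hzch
  set v : X := ∑ i ∈ t, w i • f (m i) with hvdef
  have hv0 : 0 ≤ v := Finset.sum_nonneg fun i hi => rsmul_nonneg (hw0 i hi) (hf0 (m i))
  have hqv : q v = u' := by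
    rw [hvdef, map_sum, ← hcm]
    refine Finset.sum_congr rfl fun i hi => ?_
    rw [map_smul, (hm i hi).2]
  have hφv : ε ≤ φ v := by
    rw [hvdef, map_sum]
    have hstep : ∀ i ∈ t, w i * ε ≤ φ (w i • f (m i)) := by
      intro i hi
      rw [map_smul, smul_eq_mul]
      exact mul_le_mul_of_nonneg_left (hm i hi).1.2 (hw0 i hi)
    calc ε = ∑ i ∈ t, w i * ε := by rw [← Finset.sum_mul, hw1, one_mul]
      _ ≤ ∑ i ∈ t, φ (w i • f (m i)) := Finset.sum_le_sum hstep
  have hFv : Fh v ≤ ε/4 := by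
    rw [hvdef, map_sum]
    have hstep : ∀ i ∈ t, Fh (w i • f (m i)) ≤ w i * (ε/4) := by
      intro i hi
      rw [map_smul, smul_eq_mul]
      exact mul_le_mul_of_nonneg_left (hFfn (m i) (hm i hi).1.1).le (hw0 i hi)
    calc ∑ i ∈ t, Fh (w i • f (m i)) ≤ ∑ i ∈ t, w i * (ε/4) := Finset.sum_le_sum hstep
      _ = ε/4 := by rw [← Finset.sum_mul, hw1, one_mul]
  have hsInf : sInf {c : ℝ | ∃ y : X, q y = q v ∧ c = ‖y‖} < ε' := by
    rw [← hnorm v, hqv]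
    exact hu'n
  obtain ⟨c, ⟨y, hy1, rfl⟩, hc2⟩ :=
    exists_lt_of_csInf_lt (⟨‖v‖, ⟨v, rfl, rfl⟩⟩ : Set.Nonempty {c : ℝ | ∃ y : X, q y = q v ∧ c = ‖y‖}) hsInf
  have hkerv : v - y ∈ OrderContPart X := (hker (v - y)).1 (by rw [map_sub, hy1, sub_self])
  have hw'ocp : (v - |y|)⁺ ∈ OrderContPart X := by
    refine ocp_solid hkerv ?_
    rw [abs_of_nonneg (posPart_nonneg _)]
    exact le_trans (posPart_mono (sub_le_sub_left (le_abs_self y) v)) (posPart_le_abs' _)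
  have hw'S : (v - |y|)⁺ ∈ S₂ := ⟨posPart_nonneg _, hw'ocp⟩
  have hw'v : (v - |y|)⁺ ≤ v := by
    have h := posPart_mono (sub_le_self v (abs_nonneg y))
    have h' : (v - |y|)⁺ ≤ v⁺ := h
    rwa [posPart_of_nonneg hv0] at h'
  have hrdef : v - (v - |y|)⁺ = v ⊓ |y| := hlm2 v |y|
  have hr0 : 0 ≤ v ⊓ |y| := le_inf hv0 (abs_nonneg y)
  have hrn : ‖v ⊓ |y|‖ ≤ ‖y‖ := by
    have h1 : ‖v ⊓ |y|‖ ≤ ‖(|y| : X)‖ := norm_of_le hr0 inf_le_right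
    rwa [norm_abs_eq_norm] at h1
  have e1 : φ v = φ ((v - |y|)⁺) + φ (v ⊓ |y|) := by
    rw [← map_add]
    congr 1
    rw [← hrdef]
    abel
  have e2 : φ ((v - |y|)⁺) = Fh ((v - |y|)⁺) := by
    rw [hFh _ (posPart_nonneg _), supFun_eval hS₂ hφpos hw'S]
  have e3 : Fh ((v - |y|)⁺) ≤ Fh v := by
    rw [hFh _ (posPart_nonneg _), hFh _ hv0]
    exact supFun_mono hS₂ (posPart_nonneg _) hw'v
  have e4 : φ (v ⊓ |y|) ≤ ‖φ‖ * ‖v ⊓ |y|‖ := clm_le_opNorm _ _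
  have e5 : ‖φ‖ * ‖v ⊓ |y|‖ ≤ ‖φ‖ * ε' :=
    mul_le_mul_of_nonneg_left (hrn.trans hc2.le) (norm_nonneg _)
  have e6 : ‖φ‖ * ε' ≤ ε/4 := by
    have hn : (0:ℝ) ≤ ‖φ‖ := norm_nonneg φ
    rw [hε'def, mul_comm, div_mul_eq_mul_div, div_le_div_iff₀ (by positivity) (by norm_num : (0:ℝ) < 4)]
    nlinarith
  linarith [hφv, e1, e2, e3, e4, e5, e6, hFv]
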